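/- arXiv:2110.01180 — 2 statements merged into one kernel-verified Lean document; each statement's English description precedes it below -/
import Mathlib

section
/- Let E be a row-finite directed graph, S a hereditary subset of E^0, and v ∈ ⟨S⟩, where ⟨S⟩ is the hereditary saturated closure of S. Then there exists l ∈ ℕ such that every path p with s(p) = v of length greater than l satisfies r(p) ∈ S. -/
structure DirGraph where
  V : Type
  E : Type
  src : E → V
  rng : E → V

namespace DirGraph

def RowFinite (G : DirGraph) : Prop := ∀ v : G.V, {e : G.E | G.src e = v}.Finite

def Hereditary (G : DirGraph) (H : Set G.V) : Prop :=
  ∀ e : G.E, G.src e ∈ H → G.rng e ∈ H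

def Regular (G : DirGraph) (v : G.V) : Prop := ∃ e : G.E, G.src e = v

def IsSink (G : DirGraph) (v : G.V) : Prop := ¬ G.Regular v

def Saturated (G : DirGraph) (H : Set G.V) : Prop :=
  ∀ v : G.V, G.Regular v → (∀ e : G.E, G.src e = v → G.rng e ∈ H) → v ∈ H

/-- The iterative construction `S_i` of the hereditary saturated closure. -/
def satIter (G : DirGraph) (S : Set G.V) : ℕ → Set G.V
  | 0 => S
  | n + 1 => satIter G S n ∪
      {v : G.V | G.Regular v ∧ ∀ e : G.E, G.src e = v → G.rng e ∈ satIter G S n}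

/-- The hereditary and saturated closure `⟨S⟩ = ⋃ i S_i`. -/
def hsClosure (G : DirGraph) (S : Set G.V) : Set G.V := ⋃ n : ℕ, G.satIter S n

def IsPathChain (G : DirGraph) (p : List G.E) : Prop :=
  p.Chain' fun e f => G.rng e = G.src f

/-- A path from `u` to `w`; the empty path is allowed (then `u = w`). -/
structure GPath (G : DirGraph) (u w : G.V) where
  edges : List G.E
  chain : G.IsPathChain edges
  src_eq : ∀ h : edges ≠ [], G.src (edges.head h) = u
  rng_eq : ∀ h : edges ≠ [], G.rng (edges.getLast h) = w
  nil_eq : edges = [] → u = w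

/-- A cycle: a nonempty closed simple path. -/
def IsCycle (G : DirGraph) (p : List G.E) : Prop :=
  ∃ h : p ≠ [], G.IsPathChain p ∧ G.rng (p.getLast h) = G.src (p.head h) ∧
    (p.map G.src).Nodup

/-- The cycle `p` has no exit: every edge emitted from a vertex of `p` is on `p`. -/
def CycleHasNoExit (G : DirGraph) (p : List G.E) : Prop :=
  ∀ e ∈ p, ∀ f : G.E, G.src f = G.src e → f ∈ p

def NoExitCycle (G : DirGraph) (p : List G.E) : Prop := G.IsCycle p ∧ G.CycleHasNoExit p

def OnNoExitCycle (G : DirGraph) (v : G.V) : Prop :=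
  ∃ p : List G.E, G.NoExitCycle p ∧ v ∈ p.map G.src

/-- The quotient graph `E/H`: vertices `E⁰ \ H`, edges `{e | r(e) ∉ H}`. -/
def quotGraph (G : DirGraph) (H : Set G.V) (hH : G.Hereditary H) : DirGraph where
  V := {v : G.V // v ∉ H}
  E := {e : G.E // G.rng e ∉ H}
  src e := ⟨G.src e.1, fun h => e.2 (hH e.1 h)⟩
  rng e := ⟨G.rng e.1, e.2⟩

end DirGraph


lemma chain_last_mem (G : DirGraph) (S : Set G.V) (hS : G.Hereditary S) :
    ∀ (p : List G.E) (h : p ≠ []), G.IsPathChain p → G.src (p.head h) ∈ S →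
      G.rng (p.getLast h) ∈ S := by
  intro p
  induction p with
  | nil => intro h; exact absurd rfl h
  | cons e rest ih =>
    intro h hc hsrc
    simp only [List.head_cons] at hsrc
    rw [DirGraph.IsPathChain, List.Chain', List.isChain_cons] at hc
    rcases rest.eq_nil_or_concat with hnil | _
    · subst hnil; simpa using hS e hsrc
    · have hrest : rest ≠ [] := by rintro rfl; simp_all
      rw [List.getLast_cons hrest]
      exact ih hrest hc.2 (by rw [← hc.1 _ (List.head?_eq_head hrest)]; exact hS e hsrc)

lemma satIter_path (G : DirGraph) (S : Set G.V) (hS : G.Hereditary S) :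
    ∀ (n : ℕ) (v : G.V), v ∈ G.satIter S n →
      ∀ (p : List G.E) (h : p ≠ []), G.IsPathChain p → G.src (p.head h) = v →
        n < p.length → G.rng (p.getLast h) ∈ S := by
  intro n
  induction n with
  | zero =>
    intro v hv p h hc hsrc _
    exact chain_last_mem G S hS p h hc (hsrc ▸ hv)
  | succ n ih =>
    intro v hv p h hc hsrc hlen
    rcases hv with hv | ⟨_, hall⟩
    · exact ih v hv p h hc hsrc (Nat.lt_of_succ_lt hlen)
    · cases p with
      | nil => exact absurd rfl h
      | cons e rest =>
        simp only [List.head_cons] at hsrc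
        have hre : G.rng e ∈ G.satIter S n := hall e hsrc
        rw [DirGraph.IsPathChain, List.Chain', List.isChain_cons] at hc
        have hrest : rest ≠ [] := by
          rintro rfl; simp at hlen
        rw [List.getLast_cons hrest]
        exact ih (G.rng e) hre rest hrest hc.2
          ((hc.1 _ (List.head?_eq_head hrest)).symm)
          (by simpa using Nat.succ_lt_succ_iff.mp (by simpa using hlen))

theorem stmt1 (G : DirGraph) (hrf : G.RowFinite) (S : Set G.V) (hS : G.Hereditary S)
    (v : G.V) (hv : v ∈ G.hsClosure S) :
    ∃ l : ℕ, ∀ (w : G.V) (p : G.GPath v w), l < p.edges.length → w ∈ S := by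
  obtain ⟨n, hn⟩ := Set.mem_iUnion.mp hv
  refine ⟨n, fun w p hlen => ?_⟩
  have h : p.edges ≠ [] := by
    intro h0; rw [h0] at hlen; simp at hlen
  have := satIter_path G S hS n v hn p.edges h p.chain (p.src_eq h) hlen
  rwa [p.rng_eq h] at this
end

section
/- Let E be a row-finite directed graph and H ⊆ K hereditary and saturated subsets of E^0. Define K/H to be the graph with vertices K \ H and edges {e ∈ E^1 : s(e) ∈ K, r(e) ∉ H}. Then the map K ↦ K/H is a one-to-one correspondence between hereditary saturated subsets of E containing H and hereditary saturated subsets of the quotient graph E/H, and moreover (E/H)/(K/H) = E/K. -/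
/-- An isomorphism of directed graphs. -/
structure GraphIso (G₁ G₂ : DirGraph) where
  vEquiv : G₁.V ≃ G₂.V
  eEquiv : G₁.E ≃ G₂.E
  src_comm : ∀ e : G₁.E, G₂.src (eEquiv e) = vEquiv (G₁.src e)
  rng_comm : ∀ e : G₁.E, G₂.rng (eEquiv e) = vEquiv (G₁.rng e)

theorem stmt6 (G : DirGraph) (hrf : G.RowFinite) (H : Set G.V)
    (hH : G.Hereditary H) (hHs : G.Saturated H) :
    let Q := G.quotGraph H hH
    -- the map K ↦ K/H lands in hereditary saturated subsets of E/H
    (∀ K : Set G.V, H ⊆ K → G.Hereditary K → G.Saturated K →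
       Q.Hereditary {v : Q.V | v.1 ∈ K} ∧ Q.Saturated {v : Q.V | v.1 ∈ K}) ∧
    -- injectivity
    (∀ K K' : Set G.V, H ⊆ K → G.Hereditary K → G.Saturated K →
       H ⊆ K' → G.Hereditary K' → G.Saturated K' →
       {v : Q.V | v.1 ∈ K} = {v : Q.V | v.1 ∈ K'} → K = K') ∧
    -- surjectivity
    (∀ L : Set Q.V, Q.Hereditary L → Q.Saturated L →
       ∃ K : Set G.V, H ⊆ K ∧ G.Hereditary K ∧ G.Saturated K ∧
         {v : Q.V | v.1 ∈ K} = L) ∧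
    -- (E/H)/(K/H) = E/K
    (∀ (K : Set G.V) (hK : G.Hereditary K), H ⊆ K → G.Saturated K →
       Nonempty (GraphIso
         (Q.quotGraph {v : Q.V | v.1 ∈ K} (fun e h => hK e.1 h))
         (G.quotGraph K hK))) := by
  intro Q
  refine ⟨?_, ?_, ?_, ?_⟩
  · -- well-defined
    intro K hHK hKh hKs
    constructor
    · intro e he
      exact hKh e.1 he
    · intro v hreg hall
      obtain ⟨e, he⟩ := hreg
      refine hKs v.1 ⟨e.1, congrArg Subtype.val he⟩ ?_
      intro f hf
      by_cases hfH : G.rng f ∈ H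
      · exact hHK hfH
      · exact hall ⟨f, hfH⟩ (Subtype.ext hf)
  · -- injective
    intro K K' hHK hKh hKs hHK' hK'h hK's heq
    ext v
    constructor
    · intro hv
      by_cases hvH : v ∈ H
      · exact hHK' hvH
      · have : (⟨v, hvH⟩ : Q.V) ∈ {v : Q.V | v.1 ∈ K'} := heq ▸ hv
        exact this
    · intro hv
      by_cases hvH : v ∈ H
      · exact hHK hvH
      · have : (⟨v, hvH⟩ : Q.V) ∈ {v : Q.V | v.1 ∈ K} := heq.symm ▸ hv
        exact this
  · -- surjective
    intro L hLh hLs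
    refine ⟨H ∪ {v | ∃ hv : v ∉ H, (⟨v, hv⟩ : Q.V) ∈ L}, Set.subset_union_left, ?_, ?_, ?_⟩
    · intro e he
      by_cases hrH : G.rng e ∈ H
      · exact Or.inl hrH
      · rcases he with hsH | ⟨hsv, hsL⟩
        · exact Or.inl (hH e hsH)
        · refine Or.inr ⟨hrH, ?_⟩
          have h1 : Q.src ⟨e, hrH⟩ = ⟨G.src e, hsv⟩ := Subtype.ext rfl
          have h2 := hLh ⟨e, hrH⟩ (h1 ▸ hsL)
          have h3 : Q.rng ⟨e, hrH⟩ = ⟨G.rng e, hrH⟩ := Subtype.ext rfl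
          exact h3 ▸ h2
    · intro v hreg hall
      by_cases hvH : v ∈ H
      · exact Or.inl hvH
      · refine Or.inr ⟨hvH, ?_⟩
        have hQreg : Q.Regular ⟨v, hvH⟩ := by
          by_contra hnot
          apply hvH
          refine hHs v hreg ?_
          intro e he
          by_contra hrH
          exact hnot ⟨⟨e, hrH⟩, Subtype.ext he⟩
        refine hLs ⟨v, hvH⟩ hQreg ?_
        intro f hf
        have hsrc : G.src f.1 = v := congrArg Subtype.val hf
        have := hall f.1 hsrc
        rcases this with h | ⟨hv', hL'⟩
        · exact absurd h f.2
        · exact hL'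
    · ext v
      simp only [Set.mem_setOf_eq, Set.mem_union]
      constructor
      · rintro (h | ⟨hv, hL⟩)
        · exact absurd h v.2
        · exact (show (⟨v.1, hv⟩ : Q.V) = v from Subtype.ext rfl) ▸ hL
      · intro hv
        exact Or.inr ⟨v.2, (show (⟨v.1, v.2⟩ : Q.V) = v from Subtype.ext rfl) ▸ hv⟩
  · -- iso
    intro K hK hHK hKs
    refine ⟨{
      vEquiv := {
        toFun := fun v => ⟨v.1.1, v.2⟩
        invFun := fun v => ⟨⟨v.1, fun h => v.2 (hHK h)⟩, v.2⟩
        left_inv := fun v => Subtype.ext (Subtype.ext rfl)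
        right_inv := fun v => rfl }
      eEquiv := {
        toFun := fun e => ⟨e.1.1, e.2⟩
        invFun := fun e => ⟨⟨e.1, fun h => e.2 (hHK h)⟩, e.2⟩
        left_inv := fun e => Subtype.ext (Subtype.ext rfl)
        right_inv := fun e => rfl }
      src_comm := fun e => Subtype.ext rfl
      rng_comm := fun e => Subtype.ext rfl }⟩
end
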